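/- Let L be a number field, U a finite set of primes of 𝒪_L making 𝒪_{LU} a PID and containing the primes where the Weierstrass coefficients or the x-coordinates x(T) of nonzero m-torsion points T fail to be integral. Let P ∈ E(L), and let R, R' ∈ [m]^{-1}P be distinct points with coordinates in L, neither U-integral, and write x(R) = A_R/B_R², x(R') = A_{R'}/B_{R'}² in lowest terms in 𝒪_{LU}. Then B_R and B_{R'} are coprime in 𝒪_{LU}. -/

import Mathlib

open WeierstrassCurve Polynomial
open scoped WeierstrassCurve.Affine

/-- The x-coordinate of a nonsingular point, with junk value `0` at the point at infinity. -/
noncomputable def ptx {F : Type*} [Field F] {W : WeierstrassCurve.Affine F} :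
    W.Point → F
  | .zero => 0
  | @WeierstrassCurve.Affine.Point.some _ _ _ x _ _ => x

/-- The y-coordinate of a nonsingular point, with junk value `0` at the point at infinity. -/
noncomputable def pty {F : Type*} [Field F] {W : WeierstrassCurve.Affine F} :
    W.Point → F
  | .zero => 0
  | @WeierstrassCurve.Affine.Point.some _ _ _ _ y _ => y

/-- Two points on (possibly different) Weierstrass curves over the same field agree. -/
def SamePt {F : Type*} [Field F] {W₁ W₂ : WeierstrassCurve.Affine F}
    (P : W₁.Point) (Q : W₂.Point) : Prop :=
  ptx P = ptx Q ∧ pty P = pty Q ∧ (P = .zero ↔ Q = .zero)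

open Classical in
/-- An isogeny (with base `L` and fixed algebraic closure `Ω`): a surjective, Galois-equivariant
group homomorphism on `Ω`-points with finite kernel. -/
structure Isogeny (L : Type*) [Field L] (Ω : Type*) [Field Ω] [Algebra L Ω]
    (W' W : WeierstrassCurve L) where
  hom : (W'⁄Ω).Point →+ (W⁄Ω).Point
  surjective : Function.Surjective hom
  finiteKer : Set.Finite {Q : (W'⁄Ω).Point | hom Q = 0}
  equivariant : ∀ σ : Ω ≃ₐ[L] Ω, ∀ Q : (W'⁄Ω).Point,
    hom (WeierstrassCurve.Affine.Point.map (W' := W') σ.toAlgHom Q) =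
      WeierstrassCurve.Affine.Point.map (W' := W) σ.toAlgHom (hom Q)

/-- The degree of a (separable) isogeny: the size of its kernel. -/
noncomputable def Isogeny.degree {L : Type*} [Field L] {Ω : Type*} [Field Ω] [Algebra L Ω]
    {W' W : WeierstrassCurve L} (φ : Isogeny L Ω W' W) : ℕ :=
  Nat.card {Q : (W'⁄Ω).Point | φ.hom Q = 0}

section Helpers
open IsDedekindDomain
open WeierstrassCurve Polynomial IsDedekindDomain

private lemma val_le_one_of_sq {L : Type*} [Field L] {Γ : Type*}
    [LinearOrderedCommGroupWithZero Γ] (v : Valuation L Γ) {c s t : L}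
    (hs : v s ≤ 1) (ht : v t ≤ 1) (h : c ^ 2 = s * c + t) : v c ≤ 1 := by
  by_contra hc
  push_neg at hc
  have hc0 : v c ≠ 0 := fun h0 => absurd hc (by simp [h0])
  have h2 : v c * v c ≤ v c := by
    have hle : v (c ^ 2) ≤ max (v (s * c)) (v t) := h ▸ v.map_add _ _
    have h1 : v (s * c) ≤ v c := by
      rw [v.map_mul]
      calc v s * v c ≤ 1 * v c := mul_le_mul_left hs _
        _ = v c := one_mul _
    have h3 : v t ≤ v c := ht.trans hc.le
    calc v c * v c = v (c ^ 2) := by rw [map_pow, sq]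
      _ ≤ max (v (s * c)) (v t) := hle
      _ ≤ v c := max_le h1 h3
  have : v c * v c * (v c)⁻¹ ≤ v c * (v c)⁻¹ := mul_le_mul_left h2 _
  rw [mul_inv_cancel₀ hc0, mul_assoc, mul_inv_cancel₀ hc0, mul_one] at this
  exact absurd (lt_of_lt_of_le hc this) (lt_irrefl _)

private lemma mem_integer_of_sq {L : Type*} [Field L] [NumberField L]
    {U : Set (HeightOneSpectrum (NumberField.RingOfIntegers L))}
    {c : L} (s t : U.integer L) (h : c ^ 2 = (s : L) * c + (t : L)) : c ∈ U.integer L :=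
  fun v hv => val_le_one_of_sq _ (s.2 v hv) (t.2 v hv) h

private lemma exists_common_prime {R : Type*} [CommRing R] [IsDomain R]
    [IsPrincipalIdealRing R] {a b : R} (ha : a ≠ 0) (h : ¬ IsCoprime a b) :
    ∃ p : R, Prime p ∧ p ∣ a ∧ p ∣ b := by
  have htop : Ideal.span {a, b} ≠ ⊤ := by
    intro htop
    apply h
    have h1 : (1 : R) ∈ Ideal.span ({a, b} : Set R) := htop ▸ Submodule.mem_top
    obtain ⟨u, v, huv⟩ := Ideal.mem_span_pair.mp h1
    exact ⟨u, v, huv⟩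
  obtain ⟨M, hMmax, hle⟩ := Ideal.exists_le_maximal _ htop
  haveI := hMmax.isPrime
  haveI : M.IsPrincipal := IsPrincipalIdealRing.principal M
  have haM : a ∈ M := hle (Ideal.subset_span (by simp))
  have hbM : b ∈ M := hle (Ideal.subset_span (by simp))
  have hMbot : M ≠ ⊥ := fun hbot => ha (by simpa [hbot] using haM)
  exact ⟨Submodule.IsPrincipal.generator (M : Ideal R),
    Submodule.IsPrincipal.prime_generator_of_isPrime M hMbot,
    (Submodule.IsPrincipal.mem_iff_generator_dvd M).1 haM,
    (Submodule.IsPrincipal.mem_iff_generator_dvd M).1 hbM⟩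
end Helpers

set_option maxHeartbeats 1000000 in
open Classical in
/-- let `L` be a number field and `U` a finite set of primes of `𝒪_L` such
that `𝒪_{LU}` is a PID, the Weierstrass coefficients are `U`-integral, and the
`x`-coordinates of nonzero `m`-torsion points are `U`-integral.  If `R ≠ R'` are points of
`[m]⁻¹P` with coordinates in `L`, neither `U`-integral, written in lowest terms as
`x(R) = A_R/B_R²`, `x(R') = A_{R'}/B_{R'}²` in `𝒪_{LU}`, then `B_R` and `B_{R'}` are coprime
in `𝒪_{LU}`. -/
theorem denominators_coprime {L : Type*} [Field L] [NumberField L]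
    (U : Set (IsDedekindDomain.HeightOneSpectrum (NumberField.RingOfIntegers L)))
    (hUfin : U.Finite)
    (W : WeierstrassCurve L) [W.IsElliptic]
    (hPID : IsPrincipalIdealRing (U.integer L))
    (hcoeff : W.a₁ ∈ U.integer L ∧ W.a₂ ∈ U.integer L ∧
      W.a₃ ∈ U.integer L ∧ W.a₄ ∈ U.integer L ∧ W.a₆ ∈ U.integer L)
    (m : ℕ) (hm : 2 ≤ m)
    (htors : ∀ T : (W⁄L).Point, T ≠ 0 → m • T = 0 → ptx T ∈ U.integer L)
    (P : (W⁄L).Point) (R R' : (W⁄L).Point) (hne : R ≠ R')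
    (hR : m • R = P) (hR' : m • R' = P)
    (hRnotint : ptx R ∉ U.integer L)
    (hR'notint : ptx R' ∉ U.integer L)
    (A B : U.integer L) (hAB : IsCoprime A B)
    (hxR : ptx R = (A : L) / (B : L) ^ 2)
    (A' B' : U.integer L) (hAB' : IsCoprime A' B')
    (hxR' : ptx R' = (A' : L) / (B' : L) ^ 2) :
    IsCoprime B B' := by
  classical
  obtain ⟨ha₁, ha₂, ha₃, ha₄, ha₆⟩ := hcoeff
  have hB : (B : L) ≠ 0 := by
    intro h0
    exact hRnotint (by rw [hxR, h0]; simpa using (U.integer L).zero_mem)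
  have hB' : (B' : L) ≠ 0 := by
    intro h0
    exact hR'notint (by rw [hxR', h0]; simpa using (U.integer L).zero_mem)
  obtain ⟨T, hT0, hTm, hRT⟩ : ∃ T : (W⁄L).Point, T ≠ 0 ∧ m • T = 0 ∧ R + T = R' := by
    refine ⟨R' - R, sub_ne_zero.mpr (Ne.symm hne), ?_, by abel⟩
    rw [smul_sub, hR, hR', sub_self]
  have hTu : ptx T ∈ U.integer L := htors T hT0 hTm
  rcases R with _ | @⟨x, y, hR1⟩
  · exact absurd ((U.integer L).zero_mem) hRnotint
  rcases R' with _ | @⟨x', y', hR'1⟩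
  · exact absurd ((U.integer L).zero_mem) hR'notint
  rcases T with _ | @⟨u, w, hT1⟩
  · exact absurd rfl hT0
  simp only [ptx] at hxR hxR' hRnotint hR'notint hTu
  have hxu : x ≠ u := fun h => hRnotint (by rw [h]; exact hTu)
  -- Weierstrass equations for R and T
  have hEqR : y ^ 2 + W.a₁ * x * y + W.a₃ * y
      = x ^ 3 + W.a₂ * x ^ 2 + W.a₄ * x + W.a₆ := by
    have h := ((W.baseChange L).toAffine.equation_iff x y).mp hR1.1
    simpa [WeierstrassCurve.baseChange] using h
  have hEqT : w ^ 2 + W.a₁ * u * w + W.a₃ * w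
      = u ^ 3 + W.a₂ * u ^ 2 + W.a₄ * u + W.a₆ := by
    have h := ((W.baseChange L).toAffine.equation_iff u w).mp hT1.1
    simpa [WeierstrassCurve.baseChange] using h
  -- the addition formula
  have hadd := WeierstrassCurve.Affine.Point.add_of_X_ne (h₁ := hR1) (h₂ := hT1) hxu
  rw [hadd] at hRT
  injection hRT with hxadd hyadd
  rw [WeierstrassCurve.Affine.slope_of_X_ne hxu, WeierstrassCurve.Affine.addX] at hxadd
  have hx' : ((y - w) / (x - u)) ^ 2 + W.a₁ * ((y - w) / (x - u)) - W.a₂ - x - u = x' := by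
    simpa [WeierstrassCurve.baseChange] using hxadd
  -- basic algebra
  have hxA : x * (B : L) ^ 2 = A := by rw [hxR]; field_simp
  -- integral elements
  obtain ⟨a1, ha1⟩ : ∃ z : U.integer L, (z : L) = W.a₁ := ⟨⟨_, ha₁⟩, rfl⟩
  obtain ⟨a2, ha2⟩ : ∃ z : U.integer L, (z : L) = W.a₂ := ⟨⟨_, ha₂⟩, rfl⟩
  obtain ⟨a3, ha3⟩ : ∃ z : U.integer L, (z : L) = W.a₃ := ⟨⟨_, ha₃⟩, rfl⟩
  obtain ⟨a4, ha4⟩ : ∃ z : U.integer L, (z : L) = W.a₄ := ⟨⟨_, ha₄⟩, rfl⟩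
  obtain ⟨a6, ha6⟩ : ∃ z : U.integer L, (z : L) = W.a₆ := ⟨⟨_, ha₆⟩, rfl⟩
  obtain ⟨uO, huO⟩ : ∃ z : U.integer L, (z : L) = u := ⟨⟨u, hTu⟩, rfl⟩
  have hw𝒪 : w ∈ U.integer L := by
    refine mem_integer_of_sq (-(a1 * uO + a3)) (uO ^ 3 + a2 * uO ^ 2 + a4 * uO + a6) ?_
    push_cast [ha1, ha2, ha3, ha4, ha6, huO]
    linear_combination hEqT
  obtain ⟨wO, hwO⟩ : ∃ z : U.integer L, (z : L) = w := ⟨⟨w, hw𝒪⟩, rfl⟩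
  have hc𝒪 : y * (B : L) ^ 3 ∈ U.integer L := by
    refine mem_integer_of_sq (-(a1 * A * B + a3 * B ^ 3))
      (A ^ 3 + a2 * A ^ 2 * B ^ 2 + a4 * A * B ^ 4 + a6 * B ^ 6) ?_
    push_cast [ha1, ha2, ha3, ha4, ha6]
    linear_combination ((B : L) ^ 6) * hEqR +
      (x ^ 2 * (B : L) ^ 4 + x * (B : L) ^ 2 * (A : L) + (A : L) ^ 2
        + W.a₂ * (B : L) ^ 2 * (x * (B : L) ^ 2 + (A : L)) + W.a₄ * (B : L) ^ 4
        - W.a₁ * y * (B : L) ^ 4) * hxA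
  obtain ⟨cO, hcO⟩ : ∃ z : U.integer L, (z : L) = y * (B : L) ^ 3 := ⟨⟨_, hc𝒪⟩, rfl⟩
  -- main identity in L
  have hxuB : ((A : L) - u * (B : L) ^ 2) ≠ 0 := by
    have heq : ((A : L) - u * (B : L) ^ 2) = (x - u) * (B : L) ^ 2 := by
      linear_combination -hxA
    rw [heq]
    exact mul_ne_zero (sub_ne_zero.mpr hxu) (pow_ne_zero 2 hB)
  have hmainL : (A' : L) * ((B : L) ^ 2 * ((A : L) - u * (B : L) ^ 2) ^ 2)
      = (((y - w) * (B : L) ^ 3) ^ 2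
          + W.a₁ * ((y - w) * (B : L) ^ 3) * (B : L) * ((A : L) - u * (B : L) ^ 2)
          - W.a₂ * (B : L) ^ 2 * ((A : L) - u * (B : L) ^ 2) ^ 2
          - (A : L) * ((A : L) - u * (B : L) ^ 2) ^ 2
          - u * (B : L) ^ 2 * ((A : L) - u * (B : L) ^ 2) ^ 2) * (B' : L) ^ 2 := by
    have h2 : (A' : L) / (B' : L) ^ 2
        = (((y - w) * (B : L) ^ 3) ^ 2
            + W.a₁ * ((y - w) * (B : L) ^ 3) * (B : L) * ((A : L) - u * (B : L) ^ 2)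
            - W.a₂ * (B : L) ^ 2 * ((A : L) - u * (B : L) ^ 2) ^ 2
            - (A : L) * ((A : L) - u * (B : L) ^ 2) ^ 2
            - u * (B : L) ^ 2 * ((A : L) - u * (B : L) ^ 2) ^ 2)
          / ((B : L) ^ 2 * ((A : L) - u * (B : L) ^ 2) ^ 2) := by
      rw [← hxR', ← hx', ← hxA]
      have hxu' : x - u ≠ 0 := sub_ne_zero.mpr hxu
      have h3 : x * (B : L) ^ 2 - u * (B : L) ^ 2 ≠ 0 := by
        have h4 : x * (B : L) ^ 2 - u * (B : L) ^ 2 = (x - u) * (B : L) ^ 2 := by ring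
        rw [h4]; exact mul_ne_zero hxu' (pow_ne_zero 2 hB)
      field_simp [hxu', h3]
    exact (div_eq_div_iff (pow_ne_zero 2 hB')
      (mul_ne_zero (pow_ne_zero 2 hB) (pow_ne_zero 2 hxuB))).mp h2
  -- transfer to the ring of S-integers
  have hmainO : A' * (B ^ 2 * (A - uO * B ^ 2) ^ 2)
      = ((cO - wO * B ^ 3) ^ 2 + a1 * (cO - wO * B ^ 3) * B * (A - uO * B ^ 2)
          - a2 * B ^ 2 * (A - uO * B ^ 2) ^ 2 - A * (A - uO * B ^ 2) ^ 2
          - uO * B ^ 2 * (A - uO * B ^ 2) ^ 2) * B' ^ 2 := by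
    apply Subtype.coe_injective
    push_cast [ha1, ha2, huO, hwO, hcO]
    linear_combination hmainL
  have hE1 : cO ^ 2 + a1 * A * B * cO + a3 * B ^ 3 * cO
      = A ^ 3 + a2 * A ^ 2 * B ^ 2 + a4 * A * B ^ 4 + a6 * B ^ 6 := by
    apply Subtype.coe_injective
    push_cast [ha1, ha2, ha3, ha4, ha6, hcO]
    linear_combination ((B : L) ^ 6) * hEqR +
      (x ^ 2 * (B : L) ^ 4 + x * (B : L) ^ 2 * (A : L) + (A : L) ^ 2
        + W.a₂ * (B : L) ^ 2 * (x * (B : L) ^ 2 + (A : L)) + W.a₄ * (B : L) ^ 4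
        - W.a₁ * y * (B : L) ^ 4) * hxA
  have hNM : (cO - wO * B ^ 3) ^ 2 + a1 * (cO - wO * B ^ 3) * B * (A - uO * B ^ 2)
      - a2 * B ^ 2 * (A - uO * B ^ 2) ^ 2 - A * (A - uO * B ^ 2) ^ 2
      - uO * B ^ 2 * (A - uO * B ^ 2) ^ 2
      = B ^ 2 * (a2 * A ^ 2 + a4 * A * B ^ 2 + a6 * B ^ 4 - a3 * B * cO
          - 2 * wO * B * cO + wO ^ 2 * B ^ 4
          + a1 * (-(uO * B * cO) - A * wO * B ^ 2 + uO * wO * B ^ 4)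
          - a2 * (A - uO * B ^ 2) ^ 2 + 2 * A ^ 2 * uO - A * uO ^ 2 * B ^ 2
          - uO * (A - uO * B ^ 2) ^ 2) := by
    linear_combination hE1
  have hBO : B ≠ 0 := fun h0 => hB (by rw [h0]; simp)
  have hfin : A' * (A - uO * B ^ 2) ^ 2
      = (a2 * A ^ 2 + a4 * A * B ^ 2 + a6 * B ^ 4 - a3 * B * cO
          - 2 * wO * B * cO + wO ^ 2 * B ^ 4
          + a1 * (-(uO * B * cO) - A * wO * B ^ 2 + uO * wO * B ^ 4)
          - a2 * (A - uO * B ^ 2) ^ 2 + 2 * A ^ 2 * uO - A * uO ^ 2 * B ^ 2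
          - uO * (A - uO * B ^ 2) ^ 2) * B' ^ 2 := by
    apply mul_left_cancel₀ (pow_ne_zero 2 hBO)
    linear_combination hmainO + (B' ^ 2 : U.integer L) * hNM
  by_contra hcop
  obtain ⟨p, hp, hpB, hpB'⟩ := exists_common_prime hBO hcop
  have hpA'd : p ∣ A' * (A - uO * B ^ 2) ^ 2 := by
    rw [hfin]
    exact Dvd.dvd.mul_left (dvd_pow hpB' two_ne_zero) _
  rcases hp.dvd_mul.mp hpA'd with h | h
  · exact hp.not_unit (hAB'.isUnit_of_dvd' h hpB')
  · have hpd : p ∣ A - uO * B ^ 2 := hp.dvd_of_dvd_pow h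
    have hpA : p ∣ A := by
      have h1 : p ∣ uO * B ^ 2 := Dvd.dvd.mul_left (dvd_pow hpB two_ne_zero) _
      have h2 := dvd_add hpd h1
      simpa using h2
    exact hp.not_unit (hAB.isUnit_of_dvd' hpA hpB)
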